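/- The element f₂ = -x₁^{2(m+q)+1} - x₁^{m+q-1}x₂³x₃^{q-1} + 3x₁^{m+q}x₂x₃^q - x₃^{2q+1} belongs to the second symbolic power p^{(2)} of the defining prime p of the monomial curve (t^{2q+1}, t^{2q+1+m}, t^{2q+1+2m}), but its product with x₃ lies in p². -/
import Mathlib


noncomputable section
open MvPowerSeries

/-- The `n`-th symbolic power `p⁽ⁿ⁾ = pⁿR_p ∩ R` of a prime ideal `p`. -/
def Ideal.symbolicPower {R : Type*} [CommRing R] (p : Ideal R) (hp : p.IsPrime)
    (n : ℕ) : Ideal R :=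
  haveI := hp
  ((p ^ n).map (algebraMap R (Localization.AtPrime p))).comap
    (algebraMap R (Localization.AtPrime p))

private lemma pow_sub_pow_eq_zero {k : Type*} [Field k] (a b : ℕ) (h : a = b) :
    (PowerSeries.X : PowerSeries k) ^ a - PowerSeries.X ^ b = 0 := by
  subst h; ring

/-- with `p = ker(xᵢ ↦ t^{2q+1+(i-1)m})` the defining prime of the
monomial curve `(t^{2q+1}, t^{2q+1+m}, t^{2q+1+2m})` in `R = k[[x₁,x₂,x₃]]`
(here `X 0 = x₁`, `X 1 = x₂`, `X 2 = x₃`), the element `f₂` belongs to the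
second symbolic power `p⁽²⁾`, and `x₃·f₂ ∈ p²`. -/
theorem stmt_14 {k : Type*} [Field k] (q m : ℕ) (hq : 1 ≤ q) (hm : 1 ≤ m)
    (hgcd : Nat.gcd (2 * q + 1) m = 1)
    (φ : MvPowerSeries (Fin 3) k →ₐ[k] PowerSeries k)
    (hφ : ∀ i : Fin 3, φ (X i) = PowerSeries.X ^ (2 * q + 1 + i.val * m))
    (p : Ideal (MvPowerSeries (Fin 3) k)) (hpdef : p = RingHom.ker φ.toRingHom)
    (hp : p.IsPrime)
    (f₂ : MvPowerSeries (Fin 3) k)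
    (hf₂ : f₂ = -X 0 ^ (2 * (m + q) + 1) - X 0 ^ (m + q - 1) * X 1 ^ 3 * X 2 ^ (q - 1)
        + 3 * X 0 ^ (m + q) * X 1 * X 2 ^ q - X 2 ^ (2 * q + 1)) :
    f₂ ∈ p.symbolicPower hp 2 ∧ X 2 * f₂ ∈ p ^ 2 := by
  obtain ⟨q, rfl⟩ : ∃ q', q = q' + 1 := ⟨q - 1, by omega⟩
  obtain ⟨m, rfl⟩ : ∃ m', m = m' + 1 := ⟨m - 1, by omega⟩
  set x₁ := (X 0 : MvPowerSeries (Fin 3) k) with hx1def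
  set x₂ := (X 1 : MvPowerSeries (Fin 3) k) with hx2def
  set x₃ := (X 2 : MvPowerSeries (Fin 3) k) with hx3def
  have hx1 : φ x₁ = PowerSeries.X ^ (2 * q + 3) := by
    have := hφ 0; simp only [Fin.val_zero, zero_mul, add_zero] at this
    rw [hx1def, this]; congr 1 <;> omega
  have hx2 : φ x₂ = PowerSeries.X ^ (2 * q + 4 + m) := by
    have := hφ 1; simp only [Fin.val_one, one_mul] at this
    rw [hx2def, this]; congr 1 <;> omega
  have hx3 : φ x₃ = PowerSeries.X ^ (2 * q + 5 + 2 * m) := by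
    have := hφ 2; simp only [Fin.val_two] at this
    rw [hx3def, this]; congr 1 <;> omega
  -- the three elements of p
  have hg : x₁ * x₃ - x₂ ^ 2 ∈ p := by
    rw [hpdef, RingHom.mem_ker]
    show φ (x₁ * x₃ - x₂ ^ 2) = 0
    rw [map_sub, map_mul, map_pow, hx1, hx2, hx3, ← pow_add, ← pow_mul]
    exact pow_sub_pow_eq_zero _ _ (by ring)
  have hg3 : x₃ ^ (q + 2) - x₁ ^ (m + q + 2) * x₂ ∈ p := by
    rw [hpdef, RingHom.mem_ker]
    show φ (x₃ ^ (q + 2) - x₁ ^ (m + q + 2) * x₂) = 0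
    rw [map_sub, map_mul, map_pow, map_pow, hx1, hx2, hx3, ← pow_mul, ← pow_mul, ← pow_add]
    exact pow_sub_pow_eq_zero _ _ (by ring)
  have hh : x₂ * x₃ ^ (q + 1) - x₁ ^ (m + q + 3) ∈ p := by
    rw [hpdef, RingHom.mem_ker]
    show φ (x₂ * x₃ ^ (q + 1) - x₁ ^ (m + q + 3)) = 0
    rw [map_sub, map_mul, map_pow, map_pow, hx1, hx2, hx3, ← pow_mul, ← pow_mul, ← pow_add]
    exact pow_sub_pow_eq_zero _ _ (by ring)
  -- clean form of f₂
  have hf₂' : f₂ = -x₁ ^ (2 * (m + q + 2) + 1) - x₁ ^ (m + q + 1) * x₂ ^ 3 * x₃ ^ q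
      + 3 * x₁ ^ (m + q + 2) * x₂ * x₃ ^ (q + 1) - x₃ ^ (2 * (q + 1) + 1) := by
    rw [hf₂, show m + 1 + (q + 1) - 1 = m + q + 1 from by omega,
      show q + 1 - 1 = q from by omega, show m + 1 + (q + 1) = m + q + 2 from by omega]
  -- the key algebraic identity
  have hid : x₃ * f₂ =
      -(x₃ ^ (q + 2) - x₁ ^ (m + q + 2) * x₂) ^ 2
      + (x₁ ^ (m + q + 1) * (x₂ * x₃ ^ (q + 1) - x₁ ^ (m + q + 3)))
        * (x₁ * x₃ - x₂ ^ 2) := by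
    rw [hf₂']; ring
  have hmem2 : x₃ * f₂ ∈ p ^ 2 := by
    rw [hid]
    refine Ideal.add_mem _ (neg_mem ?_) ?_
    · exact Ideal.pow_mem_pow hg3 2
    · rw [pow_two]
      exact Ideal.mul_mem_mul (Ideal.mul_mem_left _ _ hh) hg
  refine ⟨?_, hmem2⟩
  -- symbolic power membership
  haveI := hp
  have hx3notp : x₃ ∉ p := by
    rw [hpdef, RingHom.mem_ker]
    show φ x₃ ≠ 0
    rw [hx3]
    exact pow_ne_zero _ PowerSeries.X_ne_zero
  unfold Ideal.symbolicPower
  rw [Ideal.mem_comap]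
  have hu : IsUnit (algebraMap (MvPowerSeries (Fin 3) k) (Localization.AtPrime p) x₃) :=
    IsLocalization.map_units _ (⟨x₃, hx3notp⟩ : p.primeCompl)
  obtain ⟨u, hu'⟩ := hu
  have h1 : algebraMap (MvPowerSeries (Fin 3) k) (Localization.AtPrime p) (x₃ * f₂) ∈
      (p ^ 2).map (algebraMap (MvPowerSeries (Fin 3) k) (Localization.AtPrime p)) :=
    Ideal.mem_map_of_mem _ hmem2
  rw [map_mul, ← hu'] at h1
  have h2 := Ideal.mul_mem_left _ ((u⁻¹ : (Localization.AtPrime p)ˣ) : Localization.AtPrime p) h1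
  rwa [← mul_assoc, ← Units.val_mul, inv_mul_cancel, Units.val_one, one_mul] at h2
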